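/- Let G be a finite simple graph whose oriented edges are labeled by elements of a group Γ, with nonnegative edge weights x, such that every inconsistent cycle of G has total weight at least 1, and let 0 < δ ≤ 1. Let C be an inconsistent cycle in G and let v0 be a vertex of C. If d_x(v0, v) ≤ (1 − δ)/2 for every vertex v of C, then C contains an edge e with x_e ≥ δ. -/

import Mathlib

open SimpleGraph

/-- The weight of a walk: the sum of the weights of its edges, counted with multiplicity. -/
def walkWeight {V : Type*} {G : SimpleGraph V} (x : Sym2 V → ℝ) {u v : V}
    (p : G.Walk u v) : ℝ :=
  (p.edges.map x).sum

/-- The shortest-path distance between `u` and `v` induced by the edge weights `x`. -/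
noncomputable def wdist {V : Type*} (G : SimpleGraph V) (x : Sym2 V → ℝ) (u v : V) : ℝ :=
  sInf {r | ∃ p : G.Walk u v, walkWeight x p = r}

/-- The label of a walk `(v_0, v_1, …, v_l)`:
the product `g_{v_{l-1} v_l} ⋯ g_{v_1 v_2} · g_{v_0 v_1}`. -/
def walkLabel {V : Type*} {Γ : Type*} [Group Γ] {G : SimpleGraph V} (g : V → V → Γ)
    {u v : V} (p : G.Walk u v) : Γ :=
  ((p.darts.map (fun d => g d.fst d.snd)).reverse).prod

section Aux

variable {V : Type*} {Γ : Type*} [Group Γ] {G : SimpleGraph V}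

@[simp] lemma walkLabel_nil (g : V → V → Γ) {u : V} :
    walkLabel g (Walk.nil : G.Walk u u) = 1 := rfl

@[simp] lemma walkLabel_cons (g : V → V → Γ) {u v w : V} (h : G.Adj u v) (p : G.Walk v w) :
    walkLabel g (Walk.cons h p) = walkLabel g p * g u v := by
  simp [walkLabel, Walk.darts_cons]

@[simp] lemma walkLabel_append (g : V → V → Γ) {u v w : V} (p : G.Walk u v) (q : G.Walk v w) :
    walkLabel g (p.append q) = walkLabel g q * walkLabel g p := by
  simp [walkLabel, Walk.darts_append]

lemma walkLabel_reverse (g : V → V → Γ) (hg : ∀ u v, G.Adj u v → g v u = (g u v)⁻¹)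
    {u v : V} (p : G.Walk u v) : walkLabel g p.reverse = (walkLabel g p)⁻¹ := by
  induction p with
  | nil => simp
  | cons h p ih =>
    rw [Walk.reverse_cons, walkLabel_append, walkLabel_cons, walkLabel_nil, ih,
      walkLabel_cons, hg _ _ h]
    group

@[simp] lemma walkWeight_nil (x : Sym2 V → ℝ) {u : V} :
    walkWeight x (Walk.nil : G.Walk u u) = 0 := rfl

@[simp] lemma walkWeight_cons (x : Sym2 V → ℝ) {u v w : V} (h : G.Adj u v) (p : G.Walk v w) :
    walkWeight x (Walk.cons h p) = x s(u, v) + walkWeight x p := by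
  simp [walkWeight, Walk.edges_cons]

@[simp] lemma walkWeight_append (x : Sym2 V → ℝ) {u v w : V} (p : G.Walk u v) (q : G.Walk v w) :
    walkWeight x (p.append q) = walkWeight x p + walkWeight x q := by
  simp [walkWeight, Walk.edges_append]

@[simp] lemma walkWeight_reverse (x : Sym2 V → ℝ) {u v : V} (p : G.Walk u v) :
    walkWeight x p.reverse = walkWeight x p := by
  simp [walkWeight, Walk.edges_reverse, List.sum_reverse]

lemma walkWeight_nonneg (x : Sym2 V → ℝ) (hx : ∀ e ∈ G.edgeSet, 0 ≤ x e)
    {u v : V} (p : G.Walk u v) : 0 ≤ walkWeight x p := by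
  apply List.sum_nonneg
  intro a ha
  simp only [List.mem_map] at ha
  obtain ⟨e, he, rfl⟩ := ha
  exact hx e (p.edges_subset_edgeSet he)

/-- A closed walk with nodup support is nil. -/
lemma loop_eq_nil_of_nodup {v : V} (q : G.Walk v v) (hq : q.support.Nodup) : q = Walk.nil := by
  cases q with
  | nil => rfl
  | cons h r =>
    exfalso
    rw [Walk.support_cons, List.nodup_cons] at hq
    exact hq.1 r.end_mem_support

/-- A path from `u` to `v` containing the edge `s(u,v)` is a single edge. -/
lemma path_edge_case {u v : V} (hne : u ≠ v) (p : G.Walk u v) (hp : p.support.Nodup)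
    (he : s(u, v) ∈ p.edges) : ∃ h' : G.Adj u v, p = Walk.cons h' Walk.nil := by
  cases p with
  | nil => simp at he
  | @cons _ c _ h q =>
    rw [Walk.edges_cons, List.mem_cons] at he
    rw [Walk.support_cons, List.nodup_cons] at hp
    rcases he with he | he
    · rw [Sym2.eq_iff] at he
      rcases he with ⟨-, rfl⟩ | ⟨rfl, rfl⟩
      · exact ⟨h, by rw [loop_eq_nil_of_nodup q hp.2]⟩
      · exact absurd rfl hne
    · exact absurd (q.fst_mem_support_of_mem_edges he) hp.1

/-- Key lemma: if every inconsistent cycle has weight at least 1, then every inconsistent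
closed walk has weight at least 1. -/
lemma closedWalk_weight (g : V → V → Γ) (hg : ∀ u v, G.Adj u v → g v u = (g u v)⁻¹)
    (x : Sym2 V → ℝ) (hx : ∀ e ∈ G.edgeSet, 0 ≤ x e)
    (hincons : ∀ (v : V) (C : G.Walk v v), C.IsCycle → walkLabel g C ≠ 1 →
      1 ≤ walkWeight x C) :
    ∀ (n : ℕ) (v : V) (W : G.Walk v v), W.length ≤ n → walkLabel g W ≠ 1 →
      1 ≤ walkWeight x W := by
  classical
  intro n
  induction n using Nat.strong_induction_on with
  | _ n ih =>
  intro v W hlen hlab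
  cases W with
  | nil => simp at hlab
  | @cons _ u _ h p =>
    by_cases hcyc : (Walk.cons h p).IsCycle
    · exact hincons v _ hcyc hlab
    · rw [Walk.cons_isCycle_iff] at hcyc
      by_cases hpath : p.IsPath
      · -- then the edge s(v,u) is in p; p must be a single edge, so the label is trivial
        have he : s(v, u) ∈ p.edges := by tauto
        obtain ⟨h', rfl⟩ := path_edge_case h.ne.symm p ((Walk.isPath_def _).mp hpath)
          (by rwa [Sym2.eq_swap] at he)
        exfalso
        apply hlab
        rw [walkLabel_cons, walkLabel_cons, walkLabel_nil, hg _ _ h', one_mul]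
        group
      · -- p has a repeated vertex: split off an inner closed walk
        rw [Walk.isPath_def] at hpath
        obtain ⟨w, hdup⟩ := List.exists_duplicate_iff_not_nodup.mpr hpath
        have hw : w ∈ p.support := hdup.mem
        have hcount : 2 ≤ p.support.count w := List.duplicate_iff_two_le_count.mp hdup
        set q := p.takeUntil w hw with hqdef
        set r := p.dropUntil w hw with hrdef
        have hspec : q.append r = p := p.take_spec hw
        have hc1 : q.support.count w = 1 := p.count_support_takeUntil_eq_one hw
        have hwr : w ∈ r.support.tail := by
          by_contra hnot
          have h0 : (r.support.tail).count w = 0 := List.count_eq_zero.mpr hnot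
          have hcount' : 2 ≤ ((q.append r).support).count w := by rw [hspec]; exact hcount
          rw [Walk.support_append, List.count_append, hc1, h0] at hcount'
          omega
        clear_value q r
        clear hqdef hrdef
        cases r with
        | nil => simp at hwr
        | @cons _ c _ h' r' =>
          rw [Walk.support_cons, List.tail_cons] at hwr
          set r1 := r'.takeUntil w hwr with hr1def
          set r2 := r'.dropUntil w hwr with hr2def
          have hspec2 : r1.append r2 = r' := r'.take_spec hwr
          clear_value r1 r2
          clear hr1def hr2def
          subst hspec2
          subst hspec
          -- now W = cons h (q.append (cons h' (r1.append r2)))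
          have hlen' : q.length + (r1.length + r2.length + 1) + 1 ≤ n := by
            simpa [Walk.length_cons, Walk.length_append] using hlen
          have hWlab : walkLabel g (Walk.cons h (q.append (Walk.cons h' (r1.append r2))))
              = walkLabel g r2 * (walkLabel g r1 * g w c) * walkLabel g q * g v u := by
            rw [walkLabel_cons, walkLabel_append, walkLabel_cons, walkLabel_append]
            group
          have hWw : walkWeight x (Walk.cons h (q.append (Walk.cons h' (r1.append r2))))
              = (x s(w, c) + walkWeight x r1)
                + (x s(v, u) + walkWeight x q + walkWeight x r2) := by
            rw [walkWeight_cons, walkWeight_append, walkWeight_cons, walkWeight_append]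
            ring
          rw [hWw]
          by_cases hin : walkLabel g (Walk.cons h' r1) = 1
          · -- recurse on the outer walk
            have hout : walkLabel g (Walk.cons h (q.append r2)) ≠ 1 := by
              intro hout1
              apply hlab
              rw [hWlab]
              rw [walkLabel_cons, walkLabel_append] at hout1
              rw [walkLabel_cons] at hin
              rw [hin, mul_one]
              exact hout1
            have hlt : (Walk.cons h (q.append r2)).length < n := by
              simp only [Walk.length_cons, Walk.length_append]
              omega
            have h1 := ih _ hlt v (Walk.cons h (q.append r2)) le_rfl hout
            rw [walkWeight_cons, walkWeight_append] at h1
            have h2 : 0 ≤ x s(w, c) := hx _ (G.mem_edgeSet.mpr h')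
            have h3 := walkWeight_nonneg x hx r1
            linarith
          · -- recurse on the inner closed walk
            have hlt : (Walk.cons h' r1).length < n := by
              simp only [Walk.length_cons]
              omega
            have h1 := ih _ hlt w (Walk.cons h' r1) le_rfl hin
            rw [walkWeight_cons] at h1
            have h2 : 0 ≤ x s(v, u) := hx _ (G.mem_edgeSet.mpr h)
            have h3 := walkWeight_nonneg x hx q
            have h4 := walkWeight_nonneg x hx r2
            linarith

end Aux

/-- If every inconsistent cycle has total weight at least 1, `0 < δ ≤ 1`, and `C` is an
inconsistent cycle based at `v0` with `d_x(v0, v) ≤ (1 - δ)/2` for every vertex `v` of `C`,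
then `C` contains an edge of weight at least `δ`. -/
theorem stmt7 {V : Type*} [Fintype V] {Γ : Type*} [Group Γ] (G : SimpleGraph V)
    (g : V → V → Γ) (hg : ∀ u v, G.Adj u v → g v u = (g u v)⁻¹)
    (x : Sym2 V → ℝ) (δ : ℝ) (hδ0 : 0 < δ) (hδ1 : δ ≤ 1)
    (hx : ∀ e ∈ G.edgeSet, 0 ≤ x e)
    (hincons : ∀ (v : V) (C : G.Walk v v), C.IsCycle → walkLabel g C ≠ 1 →
      1 ≤ walkWeight x C)
    (v0 : V) (C : G.Walk v0 v0) (hC : C.IsCycle) (hCincons : walkLabel g C ≠ 1)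
    (hnear : ∀ v ∈ C.support, wdist G x v0 v ≤ (1 - δ) / 2) :
    ∃ e ∈ C.edges, δ ≤ x e := by
  classical
  by_contra hcon
  push_neg at hcon
  -- a maximum-weight edge of C
  have hne : C.edges ≠ [] := by
    intro hnil
    have h3 := hC.three_le_length
    have h4 := C.length_edges
    rw [hnil] at h4
    simp at h4
    omega
  obtain ⟨e0, he0mem, he0max⟩ : ∃ e0 ∈ C.edges, ∀ e ∈ C.edges, x e ≤ x e0 := by
    obtain ⟨e0, h1, h2⟩ := C.edges.toFinset.exists_max_image x
      (by simpa [List.toFinset_nonempty_iff] using hne)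
    exact ⟨e0, List.mem_toFinset.mp h1, fun e he => h2 e (List.mem_toFinset.mpr he)⟩
  set ε := (δ - x e0) / 2 with hε
  have hεpos : 0 < ε := by
    have := hcon e0 he0mem
    rw [hε]; linarith
  -- for every vertex of C choose a near-shortest walk from v0
  have hQ : ∀ v, v ∈ C.support → ∃ p : G.Walk v0 v, walkWeight x p < (1 - δ) / 2 + ε := by
    intro v hv
    have hnonempty : {r | ∃ p : G.Walk v0 v, walkWeight x p = r}.Nonempty :=
      ⟨walkWeight x (C.takeUntil v hv), C.takeUntil v hv, rfl⟩
    have hbdd : BddBelow {r | ∃ p : G.Walk v0 v, walkWeight x p = r} := by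
      refine ⟨0, ?_⟩
      rintro r ⟨p, rfl⟩
      exact walkWeight_nonneg x hx p
    have hlt : wdist G x v0 v < (1 - δ) / 2 + ε :=
      lt_of_le_of_lt (hnear v hv) (by linarith)
    rw [wdist] at hlt
    obtain ⟨r, ⟨p, rfl⟩, hr⟩ := (csInf_lt_iff hbdd hnonempty).mp hlt
    exact ⟨p, hr⟩
  choose Q hQw using hQ
  set ℓ : V → Γ := fun v => if h : v ∈ C.support then walkLabel g (Q v h) else 1 with hℓ
  -- every dart of C satisfies the cocycle condition, by consistency of small triangles
  have hdart : ∀ d ∈ C.darts, g d.fst d.snd = ℓ d.snd * (ℓ d.fst)⁻¹ := by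
    intro d hd
    have ha : d.fst ∈ C.support := C.dart_fst_mem_support_of_mem_darts hd
    have hb : d.snd ∈ C.support := C.dart_snd_mem_support_of_mem_darts hd
    have hedge : d.edge ∈ C.edges := List.mem_map_of_mem (f := SimpleGraph.Dart.edge) hd
    have hxe0 : x s(d.fst, d.snd) ≤ x e0 := by
      have : d.edge = s(d.fst, d.snd) := rfl
      rw [← this]
      exact he0max _ hedge
    have hwT : walkWeight x ((Q d.fst ha).append (Walk.cons d.adj (Q d.snd hb).reverse)) < 1 := by
      have h1 := hQw d.fst ha
      have h2 := hQw d.snd hb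
      rw [walkWeight_append, walkWeight_cons, walkWeight_reverse]
      rw [hε] at h1 h2
      linarith
    have hlabT : walkLabel g ((Q d.fst ha).append (Walk.cons d.adj (Q d.snd hb).reverse)) = 1 := by
      by_contra hne'
      have := closedWalk_weight g hg x hx hincons _ v0 _ le_rfl hne'
      linarith
    rw [walkLabel_append, walkLabel_cons, walkLabel_reverse g hg] at hlabT
    rw [mul_eq_one_iff_eq_inv, inv_mul_eq_iff_eq_mul] at hlabT
    rw [hℓ]
    simp only [dif_pos ha, dif_pos hb]
    exact hlabT
  -- telescoping along any walk whose darts satisfy the cocycle condition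
  have tele : ∀ (a b : V) (W : G.Walk a b),
      (∀ d ∈ W.darts, g d.fst d.snd = ℓ d.snd * (ℓ d.fst)⁻¹) →
      walkLabel g W = ℓ b * (ℓ a)⁻¹ := by
    intro a b W
    induction W with
    | nil => intro _; simp
    | @cons a c b h p ih =>
      intro hdd
      have h1 : g a c = ℓ c * (ℓ a)⁻¹ :=
        hdd ⟨(a, c), h⟩ (by rw [Walk.darts_cons]; exact List.mem_cons_self)
      have h2 := ih (fun d hd => hdd d (by rw [Walk.darts_cons]; exact List.mem_cons_of_mem _ hd))
      rw [walkLabel_cons, h2, h1]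
      group
  have hfinal := tele v0 v0 C hdart
  rw [mul_inv_cancel] at hfinal
  exact hCincons hfinal
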